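/- arXiv:math/0010074 — 10 statements merged into one kernel-verified Lean document; each statement's English description precedes it below -/
import Mathlib

section
/- Let A be an associative algebra over a field F with a nondegenerate symmetric associative bilinear form ⟨·,·⟩ (i.e., ⟨uv,w⟩ = ⟨u,vw⟩ for all u,v,w), and suppose A = A⁺ ⊕ A⁻ as vector spaces where A⁺ and A⁻ are subalgebras with ⟨A⁺,A⁺⟩ = 0 and ⟨A⁻,A⁻⟩ = 0. Define A⁽⁰⁾ = {u ∈ A⁺ | A⁻·u ⊆ A⁻} and A^[0] = {u ∈ A⁺ | u·A⁻ ⊆ A⁻}. Then A⁽⁰⁾ = A^[0]. -/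
/-- In a polarized associative algebra, the left stabilizer
`A⁽⁰⁾ = {u ∈ A⁺ | A⁻·u ⊆ A⁻}` equals the right stabilizer
`A^[0] = {u ∈ A⁺ | u·A⁻ ⊆ A⁻}`. -/
theorem polarized_left_stab_eq_right_stab
    {F : Type*} [Field F] {A : Type*} [Ring A] [Algebra F A]
    (B : LinearMap.BilinForm F A)
    (hsymm : ∀ u v : A, B u v = B v u)
    (hassoc : ∀ u v w : A, B (u * v) w = B u (v * w))
    (hnd : ∀ u : A, (∀ v : A, B u v = 0) → u = 0)
    (P N : Submodule F A)
    (hPmul : ∀ a ∈ P, ∀ b ∈ P, a * b ∈ P)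
    (hNmul : ∀ a ∈ N, ∀ b ∈ N, a * b ∈ N)
    (hPiso : ∀ a ∈ P, ∀ b ∈ P, B a b = 0)
    (hNiso : ∀ a ∈ N, ∀ b ∈ N, B a b = 0)
    (hcompl : IsCompl P N) :
    {u : A | u ∈ P ∧ ∀ x ∈ N, x * u ∈ N} = {u : A | u ∈ P ∧ ∀ x ∈ N, u * x ∈ N} := by
  -- criterion: a ∈ N iff B a n = 0 for all n ∈ N
  have memN : ∀ a : A, (∀ n ∈ N, B a n = 0) → a ∈ N := by
    intro a ha
    have htop : a ∈ P ⊔ N := by rw [hcompl.sup_eq_top]; trivial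
    obtain ⟨p, hp, n, hn, hpn⟩ := Submodule.mem_sup.mp htop
    have hp0 : p = 0 := by
      apply hnd
      intro v
      have hv : v ∈ P ⊔ N := by rw [hcompl.sup_eq_top]; trivial
      obtain ⟨p', hp', n', hn', hpn'⟩ := Submodule.mem_sup.mp hv
      have h1 : B p p' = 0 := hPiso p hp p' hp'
      have h2 : B p n' = 0 := by
        have : B a n' = B p n' + B n n' := by rw [← hpn]; simp
        have hnn : B n n' = 0 := hNiso n hn n' hn'
        have haN : B a n' = 0 := ha n' hn'
        rw [haN, hnn, add_zero] at this
        exact this.symm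
      rw [← hpn']
      simp [h1, h2]
    rw [← hpn, hp0, zero_add]
    exact hn
  ext u
  simp only [Set.mem_setOf_eq]
  constructor
  · rintro ⟨hu, h⟩
    refine ⟨hu, fun x hx => ?_⟩
    apply memN
    intro n hn
    rw [hsymm, ← hassoc]
    exact hNiso (n * u) (h n hn) x hx
  · rintro ⟨hu, h⟩
    refine ⟨hu, fun x hx => ?_⟩
    apply memN
    intro n hn
    rw [hassoc]
    exact hNiso x hx (u * n) (h n hn)
end

section
/- Let A = A⁺ ⊕ A⁻ be a polarized associative algebra over a field F. Define inductively A⁽⁰⁾ = {u ∈ A⁺ | A⁻u ⊆ A⁻} and A⁽ᵐ⁺¹⁾ = {u ∈ A⁺ | A⁻u ⊆ A⁽ᵐ⁾ + A⁻}. Then for all m, n ∈ ℕ, A⁽ᵐ⁾ · A⁽ⁿ⁾ ⊆ A⁽ᵐ⁺ⁿ⁾. -/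
/-- `A⁽ᵐ⁾ · A⁽ⁿ⁾ ⊆ A⁽ᵐ⁺ⁿ⁾` for all `m, n ∈ ℕ`. -/
theorem polarized_filt_mul
    {F : Type*} [Field F] {A : Type*} [Ring A] [Algebra F A]
    (B : LinearMap.BilinForm F A)
    (hsymm : ∀ u v : A, B u v = B v u)
    (hassoc : ∀ u v w : A, B (u * v) w = B u (v * w))
    (hnd : ∀ u : A, (∀ v : A, B u v = 0) → u = 0)
    (P N : Submodule F A)
    (hPmul : ∀ a ∈ P, ∀ b ∈ P, a * b ∈ P)
    (hNmul : ∀ a ∈ N, ∀ b ∈ N, a * b ∈ N)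
    (hPiso : ∀ a ∈ P, ∀ b ∈ P, B a b = 0)
    (hNiso : ∀ a ∈ N, ∀ b ∈ N, B a b = 0)
    (hcompl : IsCompl P N)
    (Filt : ℕ → Set A)
    (hF0 : Filt 0 = {u : A | u ∈ P ∧ ∀ x ∈ N, x * u ∈ N})
    (hFs : ∀ m : ℕ, Filt (m + 1) =
      {u : A | u ∈ P ∧ ∀ x ∈ N, ∃ y ∈ Filt m, ∃ z ∈ N, x * u = y + z}) :
    ∀ m n : ℕ, ∀ u ∈ Filt m, ∀ v ∈ Filt n, u * v ∈ Filt (m + n) := by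
  -- Every filtration piece contains 0.
  have hzero : ∀ m, (0:A) ∈ Filt m := by
    intro m
    induction m with
    | zero => rw [hF0]; exact ⟨P.zero_mem, fun x hx => by simpa using N.zero_mem⟩
    | succ m ih =>
      rw [hFs]
      exact ⟨P.zero_mem, fun x hx => ⟨0, ih, 0, N.zero_mem, by simp⟩⟩
  -- Every filtration piece is closed under addition.
  have hadd : ∀ m, ∀ a ∈ Filt m, ∀ b ∈ Filt m, a + b ∈ Filt m := by
    intro m
    induction m with
    | zero =>
      rw [hF0]
      rintro a ⟨haP, ha⟩ b ⟨hbP, hb⟩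
      exact ⟨P.add_mem haP hbP, fun x hx => by
        rw [mul_add]; exact N.add_mem (ha x hx) (hb x hx)⟩
    | succ m ih =>
      rw [hFs]
      rintro a ⟨haP, ha⟩ b ⟨hbP, hb⟩
      refine ⟨P.add_mem haP hbP, fun x hx => ?_⟩
      obtain ⟨y1, hy1, z1, hz1, h1⟩ := ha x hx
      obtain ⟨y2, hy2, z2, hz2, h2⟩ := hb x hx
      exact ⟨y1 + y2, ih _ hy1 _ hy2, z1 + z2, N.add_mem hz1 hz2, by
        rw [mul_add, h1, h2]; abel⟩
  -- The filtration is increasing.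
  have hmono1 : ∀ m, Filt m ⊆ Filt (m+1) := by
    intro m
    induction m with
    | zero =>
      intro u hu
      rw [hF0] at hu
      rw [hFs]
      exact ⟨hu.1, fun x hx => ⟨0, hzero 0, x*u, hu.2 x hx, by simp⟩⟩
    | succ m ih =>
      intro u hu
      rw [hFs] at hu
      rw [hFs]
      refine ⟨hu.1, fun x hx => ?_⟩
      obtain ⟨y, hy, z, hz, h⟩ := hu.2 x hx
      exact ⟨y, ih hy, z, hz, h⟩
  have hmono : ∀ {m n : ℕ}, m ≤ n → Filt m ⊆ Filt n := by
    intro m n h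
    induction h with
    | refl => exact fun _ h => h
    | @step k hk ih => exact fun u hu => hmono1 k (ih hu)
  -- Every filtration piece lies in P.
  have hFP : ∀ m, ∀ u ∈ Filt m, u ∈ P := by
    intro m
    cases m with
    | zero => rw [hF0]; exact fun u hu => hu.1
    | succ m => rw [hFs]; exact fun u hu => hu.1
  -- Main induction on m.
  intro m
  induction m with
  | zero =>
    intro n u hu v hv
    rw [hF0] at hu
    cases n with
    | zero =>
      rw [hF0] at hv ⊢
      refine ⟨hPmul u hu.1 v hv.1, fun x hx => ?_⟩
      rw [← mul_assoc]
      exact hv.2 _ (hu.2 x hx)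
    | succ n =>
      rw [hFs] at hv
      rw [Nat.zero_add, hFs]
      refine ⟨hPmul u hu.1 v hv.1, fun x hx => ?_⟩
      obtain ⟨y, hy, z, hz, h⟩ := hv.2 _ (hu.2 x hx)
      exact ⟨y, hy, z, hz, by rw [← mul_assoc, h]⟩
  | succ m ih =>
    intro n u hu v hv
    rw [hFs] at hu
    have hmn : m + 1 + n = (m + n) + 1 := by ring
    rw [hmn, hFs]
    refine ⟨hPmul u hu.1 v (hFP n v hv), fun x hx => ?_⟩
    obtain ⟨y, hy, z, hz, h⟩ := hu.2 x hx
    have hyv : y * v ∈ Filt (m + n) := ih n y hy v hv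
    cases n with
    | zero =>
      rw [hF0] at hv
      refine ⟨y * v, by simpa using hyv, z * v, hv.2 z hz, ?_⟩
      rw [← mul_assoc, h, add_mul]
    | succ n =>
      rw [hFs] at hv
      obtain ⟨y2, hy2, z2, hz2, h2⟩ := hv.2 z hz
      have hy2' : y2 ∈ Filt (m + (n+1)) := hmono (by omega) hy2
      refine ⟨y * v + y2, hadd _ _ hyv _ hy2', z2, hz2, ?_⟩
      rw [← mul_assoc, h, add_mul, h2]
      abel
end

section
/- Let A = A⁺ ⊕ A⁻ be a polarized associative algebra over a field F with filtration A⁽⁰⁾ = {u ∈ A⁺ | A⁻u ⊆ A⁻}, A⁽ᵐ⁺¹⁾ = {u ∈ A⁺ | A⁻u ⊆ A⁽ᵐ⁾ + A⁻}, and set A⁽⁻¹⁾ = A⁻ and A⁽⁻²⁻ᵐ⁾ = {u ∈ A⁻ | ⟨u, A⁽ᵐ⁾⟩ = 0} for m ∈ ℕ. Then for all m, n ∈ ℕ: A⁽⁻ᵐ⁻¹⁾ · A⁽⁻ⁿ⁻¹⁾ ⊆ A⁽⁻ᵐ⁻ⁿ⁻²⁾. -/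
/-- `A⁽⁻ᵐ⁻¹⁾ · A⁽⁻ⁿ⁻¹⁾ ⊆ A⁽⁻ᵐ⁻ⁿ⁻²⁾`.  Here `NFilt k` stands for
`A⁽⁻ᵏ⁻¹⁾`, so `NFilt 0 = A⁽⁻¹⁾ = A⁻` and `NFilt (m+1) = A⁽⁻²⁻ᵐ⁾`, and the claim
reads `NFilt m · NFilt n ⊆ NFilt (m + n + 1)`. -/
theorem polarized_neg_filt_mul
    {F : Type*} [Field F] {A : Type*} [Ring A] [Algebra F A]
    (B : LinearMap.BilinForm F A)
    (hsymm : ∀ u v : A, B u v = B v u)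
    (hassoc : ∀ u v w : A, B (u * v) w = B u (v * w))
    (hnd : ∀ u : A, (∀ v : A, B u v = 0) → u = 0)
    (P N : Submodule F A)
    (hPmul : ∀ a ∈ P, ∀ b ∈ P, a * b ∈ P)
    (hNmul : ∀ a ∈ N, ∀ b ∈ N, a * b ∈ N)
    (hPiso : ∀ a ∈ P, ∀ b ∈ P, B a b = 0)
    (hNiso : ∀ a ∈ N, ∀ b ∈ N, B a b = 0)
    (hcompl : IsCompl P N)
    (Filt : ℕ → Set A)
    (hF0 : Filt 0 = {u : A | u ∈ P ∧ ∀ x ∈ N, x * u ∈ N})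
    (hFs : ∀ m : ℕ, Filt (m + 1) =
      {u : A | u ∈ P ∧ ∀ x ∈ N, ∃ y ∈ Filt m, ∃ z ∈ N, x * u = y + z})
    (NFilt : ℕ → Set A)
    (hN0 : NFilt 0 = (N : Set A))
    (hNs : ∀ m : ℕ, NFilt (m + 1) = {u : A | u ∈ N ∧ ∀ y ∈ Filt m, B u y = 0}) :
    ∀ m n : ℕ, ∀ u ∈ NFilt m, ∀ v ∈ NFilt n, u * v ∈ NFilt (m + n + 1) := by
  -- NFilt j ⊆ N
  have hNsub : ∀ j, ∀ u ∈ NFilt j, u ∈ N := by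
    intro j u hu
    cases j with
    | zero => rw [hN0] at hu; exact hu
    | succ k => rw [hNs k] at hu; exact hu.1
  -- 0 ∈ Filt j
  have hzeroF : ∀ j, (0 : A) ∈ Filt j := by
    intro j
    induction j with
    | zero =>
      rw [hF0]
      exact ⟨P.zero_mem, fun x _ => by simpa using N.zero_mem⟩
    | succ k ih =>
      rw [hFs k]
      exact ⟨P.zero_mem, fun x hx => ⟨0, ih, 0, N.zero_mem, by simp⟩⟩
  -- Filt is increasing
  have hmono1 : ∀ j, ∀ u ∈ Filt j, u ∈ Filt (j + 1) := by
    intro j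
    induction j with
    | zero =>
      intro u hu
      rw [hF0] at hu
      rw [hFs 0]
      exact ⟨hu.1, fun x hx => ⟨0, hzeroF 0, x * u, hu.2 x hx, by simp⟩⟩
    | succ k ih =>
      intro u hu
      rw [hFs k] at hu
      rw [hFs (k + 1)]
      refine ⟨hu.1, fun x hx => ?_⟩
      obtain ⟨y, hy, z, hz, hxy⟩ := hu.2 x hx
      exact ⟨y, ih y hy, z, hz, hxy⟩
  have hmonoD : ∀ d j : ℕ, ∀ u ∈ Filt j, u ∈ Filt (j + d) := by
    intro d
    induction d with
    | zero => intro j u hu; exact hu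
    | succ e ih => intro j u hu; exact hmono1 (j + e) u (ih j u hu)
  have hmono : ∀ j j' : ℕ, j ≤ j' → ∀ u ∈ Filt j, u ∈ Filt j' := by
    intro j j' h u hu
    obtain ⟨d, rfl⟩ := Nat.exists_eq_add_of_le h
    exact hmonoD d j u hu
  -- decomposition A = P + N
  have hdecomp : ∀ a : A, ∃ p ∈ P, ∃ x ∈ N, a = p + x := by
    intro a
    have ha : a ∈ P ⊔ N := by rw [hcompl.sup_eq_top]; trivial
    obtain ⟨p, hp, x, hx, h⟩ := Submodule.mem_sup.mp ha
    exact ⟨p, hp, x, hx, h.symm⟩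
  -- an element orthogonal to P and N is zero
  have hzero_of : ∀ p : A, (∀ t ∈ N, B p t = 0) → (∀ s ∈ P, B p s = 0) → p = 0 := by
    intro p h1 h2
    apply hnd
    intro v
    obtain ⟨s, hs, t, ht, rfl⟩ := hdecomp v
    rw [map_add, h2 s hs, h1 t ht, add_zero]
  -- KEY LEMMA: Filt k · NFilt m ⊆ Filt (k - m - 1) + N, vanishing P-part if k ≤ m
  have key : ∀ k m : ℕ, ∀ u ∈ NFilt m, ∀ w ∈ Filt k,
      (k ≤ m → w * u ∈ N) ∧
      (∀ j : ℕ, k = m + 1 + j → ∃ p ∈ Filt j, ∃ x ∈ N, w * u = p + x) := by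
    intro k
    induction k with
    | zero =>
      intro m u hu w hw
      have huN : u ∈ N := hNsub m u hu
      rw [hF0] at hw
      constructor
      · intro _
        obtain ⟨p, hp, x, hx, hwu⟩ := hdecomp (w * u)
        have hp0 : p = 0 := by
          apply hzero_of p
          · intro t ht
            have h1 : B (t * w) u = B t p := by
              rw [hassoc t w u, hwu, map_add, hNiso t ht x hx, add_zero]
            have h2 : B (t * w) u = 0 := hNiso (t * w) (hw.2 t ht) u huN
            rw [hsymm p t, ← h1]; exact h2
          · intro s hs
            exact hPiso p hp s hs
        rw [hwu, hp0, zero_add]; exact hx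
      · intro j hj; omega
    | succ k' ih =>
      intro m u hu w hw
      have huN : u ∈ N := hNsub m u hu
      rw [hFs k'] at hw
      simp only [Set.mem_setOf_eq] at hw
      obtain ⟨p, hp, x, hx, hwu⟩ := hdecomp (w * u)
      have hp' : p = w * u - x := by rw [hwu]; abel
      have hstep : ∀ x' ∈ N, ∃ p₁ ∈ Filt k', ∃ r ∈ N, x' * p = p₁ * u + r := by
        intro x' hx'
        obtain ⟨p₁, hp₁, z₁, hz₁, hx'w⟩ := hw.2 x' hx'
        refine ⟨p₁, hp₁, z₁ * u - x' * x,
          N.sub_mem (hNmul z₁ hz₁ u huN) (hNmul x' hx' x hx), ?_⟩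
        rw [hp', mul_sub, ← mul_assoc, hx'w, add_mul]
        abel
      constructor
      · intro hkm
        have hp0 : p = 0 := by
          apply hzero_of p
          · intro t ht
            have h1 : B (t * w) u = B t p := by
              rw [hassoc t w u, hwu, map_add, hNiso t ht x hx, add_zero]
            obtain ⟨p₂, hp₂, z₂, hz₂, htw⟩ := hw.2 t ht
            obtain ⟨m'', rfl⟩ : ∃ m'', m = m'' + 1 := ⟨m - 1, by omega⟩
            rw [hNs m''] at hu
            simp only [Set.mem_setOf_eq] at hu
            have h2 : B (t * w) u = 0 := by
              rw [htw, map_add, LinearMap.add_apply, hsymm p₂ u,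
                hu.2 p₂ (hmono k' m'' (by omega) p₂ hp₂),
                hNiso z₂ hz₂ u huN, add_zero]
            rw [hsymm p t, ← h1]; exact h2
          · intro s hs
            exact hPiso p hp s hs
        rw [hwu, hp0, zero_add]; exact hx
      · intro j hj
        refine ⟨p, ?_, x, hx, hwu⟩
        cases j with
        | zero =>
          rw [hF0]
          refine ⟨hp, fun x' hx' => ?_⟩
          obtain ⟨p₁, hp₁, r, hr, hxp⟩ := hstep x' hx'
          have hp₁u : p₁ * u ∈ N := (ih m u hu p₁ hp₁).1 (by omega)
          rw [hxp]; exact N.add_mem hp₁u hr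
        | succ j' =>
          rw [hFs j']
          refine ⟨hp, fun x' hx' => ?_⟩
          obtain ⟨p₁, hp₁, r, hr, hxp⟩ := hstep x' hx'
          obtain ⟨p₃, hp₃, x₃, hx₃, h31⟩ := (ih m u hu p₁ hp₁).2 j' (by omega)
          exact ⟨p₃, hp₃, x₃ + r, N.add_mem hx₃ hr, by rw [hxp, h31]; abel⟩
  -- main proof
  intro m n u hu v hv
  have huN := hNsub m u hu
  have hvN := hNsub n v hv
  rw [hNs (m + n)]
  refine ⟨hNmul u huN v hvN, fun y hy => ?_⟩
  have e : B (u * v) y = B (y * u) v := by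
    rw [hsymm (u * v) y, ← hassoc y u v]
  rw [e]
  cases n with
  | zero =>
    have hyuN : y * u ∈ N := (key (m + 0) m u hu y hy).1 (by omega)
    exact hNiso (y * u) hyuN v hvN
  | succ n' =>
    obtain ⟨p, hp, x, hx, hyu⟩ := (key (m + (n' + 1)) m u hu y hy).2 n' (by omega)
    rw [hNs n'] at hv
    simp only [Set.mem_setOf_eq] at hv
    rw [hyu, map_add, LinearMap.add_apply, hsymm p v, hv.2 p hp,
      hNiso x hx v hvN, add_zero]
end

section
/- Let A = A⁺ ⊕ A⁻ be a polarized associative algebra with filtration A⁽ᵐ⁾ (m ∈ ℤ) defined by A⁽⁰⁾ = {u ∈ A⁺ | A⁻u ⊆ A⁻}, A⁽ᵐ⁺¹⁾ = {u ∈ A⁺ | A⁻u ⊆ A⁽ᵐ⁾ + A⁻}, A⁽⁻¹⁾ = A⁻, and A⁽⁻²⁻ᵐ⁾ = {u ∈ A⁻ | ⟨u, A⁽ᵐ⁾⟩ = 0}. Then for all m, n ∈ ℕ: A⁽ᵐ⁾ · A⁽⁻ᵐ⁻ⁿ⁻²⁾ ⊆ A⁽⁻ⁿ⁻²⁾. 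-/
/-- `A⁽ᵐ⁾ · A⁽⁻ᵐ⁻ⁿ⁻²⁾ ⊆ A⁽⁻ⁿ⁻²⁾`.  With `NFilt k = A⁽⁻ᵏ⁻¹⁾` this
reads `Filt m · NFilt (m + n + 1) ⊆ NFilt (n + 1)`. -/
theorem polarized_pos_mul_neg_filt
    {F : Type*} [Field F] {A : Type*} [Ring A] [Algebra F A]
    (B : LinearMap.BilinForm F A)
    (hsymm : ∀ u v : A, B u v = B v u)
    (hassoc : ∀ u v w : A, B (u * v) w = B u (v * w))
    (hnd : ∀ u : A, (∀ v : A, B u v = 0) → u = 0)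
    (P N : Submodule F A)
    (hPmul : ∀ a ∈ P, ∀ b ∈ P, a * b ∈ P)
    (hNmul : ∀ a ∈ N, ∀ b ∈ N, a * b ∈ N)
    (hPiso : ∀ a ∈ P, ∀ b ∈ P, B a b = 0)
    (hNiso : ∀ a ∈ N, ∀ b ∈ N, B a b = 0)
    (hcompl : IsCompl P N)
    (Filt : ℕ → Set A)
    (hF0 : Filt 0 = {u : A | u ∈ P ∧ ∀ x ∈ N, x * u ∈ N})
    (hFs : ∀ m : ℕ, Filt (m + 1) =
      {u : A | u ∈ P ∧ ∀ x ∈ N, ∃ y ∈ Filt m, ∃ z ∈ N, x * u = y + z})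
    (NFilt : ℕ → Set A)
    (hN0 : NFilt 0 = (N : Set A))
    (hNs : ∀ m : ℕ, NFilt (m + 1) = {u : A | u ∈ N ∧ ∀ y ∈ Filt m, B u y = 0}) :
    ∀ m n : ℕ, ∀ u ∈ Filt m, ∀ v ∈ NFilt (m + n + 1), u * v ∈ NFilt (n + 1) := by
  -- Filt m ⊆ P
  have hFP : ∀ m : ℕ, ∀ u ∈ Filt m, u ∈ P := by
    intro m u hu
    cases m with
    | zero => rw [hF0] at hu; exact hu.1
    | succ k => rw [hFs] at hu; exact hu.1
  -- NFilt k ⊆ N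
  have hNN : ∀ k : ℕ, ∀ v ∈ NFilt k, v ∈ N := by
    intro k v hv
    cases k with
    | zero => rw [hN0] at hv; exact hv
    | succ j => rw [hNs] at hv; exact hv.1
  -- Filt m is closed under addition
  have hadd : ∀ m : ℕ, ∀ u ∈ Filt m, ∀ w ∈ Filt m, u + w ∈ Filt m := by
    intro m
    induction m with
    | zero =>
      intro u hu w hw
      rw [hF0] at hu hw ⊢
      refine ⟨P.add_mem hu.1 hw.1, fun x hx => ?_⟩
      rw [mul_add]; exact N.add_mem (hu.2 x hx) (hw.2 x hx)
    | succ k ih =>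
      intro u hu w hw
      rw [hFs] at hu hw ⊢
      refine ⟨P.add_mem hu.1 hw.1, fun x hx => ?_⟩
      obtain ⟨y, hy, z, hz, he⟩ := hu.2 x hx
      obtain ⟨y', hy', z', hz', he'⟩ := hw.2 x hx
      exact ⟨y + y', ih y hy y' hy', z + z', N.add_mem hz hz',
        by rw [mul_add, he, he']; abel⟩
  -- Filt m ⊆ Filt (m+1)
  have hstep : ∀ m : ℕ, ∀ u ∈ Filt m, u ∈ Filt (m + 1) := by
    intro m
    induction m with
    | zero =>
      intro u hu
      rw [hF0] at hu
      rw [hFs]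
      refine ⟨hu.1, fun x hx => ⟨0, ?_, x * u, hu.2 x hx, (zero_add _).symm⟩⟩
      rw [hF0]
      exact ⟨P.zero_mem, fun x' hx' => by rw [mul_zero]; exact N.zero_mem⟩
    | succ k ih =>
      intro u hu
      rw [hFs] at hu
      rw [hFs]
      refine ⟨hu.1, fun x hx => ?_⟩
      obtain ⟨y, hy, z, hz, he⟩ := hu.2 x hx
      exact ⟨y, ih y hy, z, hz, he⟩
  -- Filt is monotone
  have hmono : ∀ k l : ℕ, k ≤ l → ∀ u ∈ Filt k, u ∈ Filt l := by
    intro k l h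
    induction h with
    | refl => exact fun u hu => hu
    | step h ih => exact fun u hu => hstep _ u (ih u hu)
  -- multiplicativity: Filt m * Filt n ⊆ Filt (m+n)
  have hmul : ∀ m n : ℕ, ∀ u ∈ Filt m, ∀ w ∈ Filt n, u * w ∈ Filt (m + n) := by
    intro m
    induction m with
    | zero =>
      intro n u hu w hw
      rw [Nat.zero_add]
      rw [hF0] at hu
      cases n with
      | zero =>
        rw [hF0] at hw ⊢
        exact ⟨hPmul u hu.1 w hw.1, fun x hx => by
          rw [← mul_assoc]; exact hw.2 _ (hu.2 x hx)⟩
      | succ k =>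
        rw [hFs] at hw ⊢
        refine ⟨hPmul u hu.1 w hw.1, fun x hx => ?_⟩
        obtain ⟨y, hy, z, hz, he⟩ := hw.2 (x * u) (hu.2 x hx)
        exact ⟨y, hy, z, hz, by rw [← mul_assoc, he]⟩
    | succ k ih =>
      intro n u hu w hw
      rw [Nat.succ_add, hFs]
      rw [hFs] at hu
      refine ⟨hPmul u hu.1 w (hFP n w hw), fun x hx => ?_⟩
      obtain ⟨y, hy, z, hz, he⟩ := hu.2 x hx
      have hyw : y * w ∈ Filt (k + n) := ih n y hy w hw
      cases n with
      | zero =>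
        rw [hF0] at hw
        refine ⟨y * w, hyw, z * w, hw.2 z hz, ?_⟩
        rw [← mul_assoc, he, add_mul]
      | succ j =>
        rw [hFs] at hw
        obtain ⟨y', hy', z', hz', he'⟩ := hw.2 z hz
        refine ⟨y * w + y', hadd _ _ hyw _ (hmono j (k + (j + 1)) (by omega) y' hy'),
          z', hz', ?_⟩
        rw [← mul_assoc, he, add_mul, he']; abel
  intro m n u hu v hv
  have hvN : v ∈ N := hNN _ v hv
  have hvkill : ∀ y ∈ Filt (m + n), B v y = 0 := by
    rw [hNs] at hv; exact hv.2
  -- B (u*v) x = 0 for all x ∈ N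
  have key : ∀ x ∈ N, B (u * v) x = 0 := by
    intro x hx
    rw [hsymm (u * v) x, ← hassoc x u v]
    cases m with
    | zero =>
      rw [hF0] at hu
      exact hNiso _ (hu.2 x hx) _ hvN
    | succ k =>
      rw [hFs] at hu
      obtain ⟨y, hy, z, hz, he⟩ := hu.2 x hx
      have h1 : B y v = 0 := by
        rw [hsymm]
        exact hvkill y (hmono k (k + 1 + n) (by omega) y hy)
      have h2 : B z v = 0 := hNiso z hz v hvN
      rw [he]
      simp [h1, h2]
  -- u * v ∈ N
  have huvN : u * v ∈ N := by
    have hmem : u * v ∈ P ⊔ N := by rw [hcompl.sup_eq_top]; trivial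
    obtain ⟨p, hp, q, hq, hpq⟩ := Submodule.mem_sup.mp hmem
    have hp0 : p = 0 := by
      apply hnd
      intro a
      have haS : a ∈ P ⊔ N := by rw [hcompl.sup_eq_top]; trivial
      obtain ⟨a1, ha1, a2, ha2, ha⟩ := Submodule.mem_sup.mp haS
      have h1 : B p a1 = 0 := hPiso p hp a1 ha1
      have h2 : B p a2 = 0 := by
        have e : B (u * v) a2 = B p a2 + B q a2 := by rw [← hpq]; simp
        rw [key a2 ha2, hNiso q hq a2 ha2] at e
        simpa using e.symm
      rw [← ha]
      simp [h1, h2]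
    have : u * v = q := by rw [← hpq, hp0, zero_add]
    rw [this]; exact hq
  rw [hNs]
  refine ⟨huvN, fun y hy => ?_⟩
  rw [hsymm (u * v) y, ← hassoc y u v, hsymm (y * u) v]
  exact hvkill (y * u) (by have := hmul n m y hy u hu; rwa [Nat.add_comm n m] at this)
end

section
/- Let A = A⁺ ⊕ A⁻ be a polarized associative algebra with filtration A⁽ᵐ⁾ (m ∈ ℤ) as above. Then for all m, n ∈ ℕ: A⁽ᵐ⁺ⁿ⁾ · A⁽⁻ⁿ⁻¹⁾ ⊆ A⁽ᵐ⁻¹⁾ + A⁻, where A⁽⁻¹⁾ = A⁻ is used when m = 0. -/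
/-- `A⁽ᵐ⁺ⁿ⁾ · A⁽⁻ⁿ⁻¹⁾ ⊆ A⁽ᵐ⁻¹⁾ + A⁻`, where `A⁽⁻¹⁾ = A⁻` is used
when `m = 0`.  With `NFilt k = A⁽⁻ᵏ⁻¹⁾` this says every product `u * v` with
`u ∈ Filt (m+n)` and `v ∈ NFilt n` decomposes as `y + z` with `z ∈ A⁻` and
`y ∈ A⁻` (if `m = 0`) or `y ∈ Filt (m-1)` (if `m > 0`). -/
theorem polarized_filt_mul_neg
    {F : Type*} [Field F] {A : Type*} [Ring A] [Algebra F A]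
    (B : LinearMap.BilinForm F A)
    (hsymm : ∀ u v : A, B u v = B v u)
    (hassoc : ∀ u v w : A, B (u * v) w = B u (v * w))
    (hnd : ∀ u : A, (∀ v : A, B u v = 0) → u = 0)
    (P N : Submodule F A)
    (hPmul : ∀ a ∈ P, ∀ b ∈ P, a * b ∈ P)
    (hNmul : ∀ a ∈ N, ∀ b ∈ N, a * b ∈ N)
    (hPiso : ∀ a ∈ P, ∀ b ∈ P, B a b = 0)
    (hNiso : ∀ a ∈ N, ∀ b ∈ N, B a b = 0)
    (hcompl : IsCompl P N)
    (Filt : ℕ → Set A)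
    (hF0 : Filt 0 = {u : A | u ∈ P ∧ ∀ x ∈ N, x * u ∈ N})
    (hFs : ∀ m : ℕ, Filt (m + 1) =
      {u : A | u ∈ P ∧ ∀ x ∈ N, ∃ y ∈ Filt m, ∃ z ∈ N, x * u = y + z})
    (NFilt : ℕ → Set A)
    (hN0 : NFilt 0 = (N : Set A))
    (hNs : ∀ m : ℕ, NFilt (m + 1) = {u : A | u ∈ N ∧ ∀ y ∈ Filt m, B u y = 0}) :
    ∀ m n : ℕ, ∀ u ∈ Filt (m + n), ∀ v ∈ NFilt n,
      ∃ y ∈ (match m with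
              | 0 => (N : Set A)
              | m' + 1 => Filt m'),
        ∃ z ∈ N, u * v = y + z := by
  have hNF : ∀ n : ℕ, NFilt n ⊆ (N : Set A) := by
    intro n
    cases n with
    | zero => rw [hN0]
    | succ k => rw [hNs]; intro v hv; exact hv.1
  have decomp : ∀ a : A, ∃ p ∈ P, ∃ z ∈ N, a = p + z := by
    intro a
    have ha : a ∈ P ⊔ N := by rw [hcompl.sup_eq_top]; trivial
    obtain ⟨p, hp, z, hz, h⟩ := Submodule.mem_sup.mp ha
    exact ⟨p, hp, z, hz, h.symm⟩
  intro m
  induction m with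
  | zero =>
    intro n u hu v hv
    have hvN : v ∈ N := hNF n hv
    obtain ⟨p, hp, z, hz, hpz⟩ := decomp (u * v)
    have huv : ∀ w ∈ N, B w (u * v) = 0 := by
      intro w hw
      rw [← hassoc]
      simp only [Nat.zero_add] at hu
      cases n with
      | zero =>
        rw [hF0] at hu
        exact hNiso _ (hu.2 w hw) v hvN
      | succ k =>
        rw [hFs] at hu
        obtain ⟨y, hy, z', hz', heq⟩ := hu.2 w hw
        rw [hNs] at hv
        rw [heq, map_add, LinearMap.add_apply, hsymm y v, hv.2 y hy,
          hNiso z' hz' v hvN, add_zero]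
    have hp0 : p = 0 := by
      apply hnd
      intro w
      obtain ⟨w1, hw1, w2, hw2, hw⟩ := decomp w
      have h2 : B p w2 = 0 := by
        have hpe : p = u * v - z := by rw [hpz]; abel
        rw [hpe, map_sub, LinearMap.sub_apply, hsymm (u*v) w2, huv w2 hw2,
          hNiso z hz w2 hw2, sub_zero]
      rw [hw, map_add, hPiso p hp w1 hw1, h2, add_zero]
    refine ⟨0, N.zero_mem, u * v, ?_, (zero_add _).symm⟩
    rw [hpz, hp0, zero_add]; exact hz
  | succ m' ih =>
    intro n u hu v hv
    have hvN : v ∈ N := hNF n hv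
    obtain ⟨p, hp, z, hz, hpz⟩ := decomp (u * v)
    have key : ∀ x ∈ N, ∃ y ∈ (match m' with
              | 0 => (N : Set A)
              | k + 1 => Filt k), ∃ w ∈ N, x * p = y + w := by
      intro x hx
      have hu' : u ∈ Filt (m' + n + 1) := by rwa [Nat.add_right_comm] at hu
      rw [hFs] at hu'
      obtain ⟨y1, hy1, z1, hz1, hxu⟩ := hu'.2 x hx
      obtain ⟨y2, hy2, z2, hz2, hy1v⟩ := ih n y1 hy1 v hv
      refine ⟨y2, hy2, z2 + z1 * v - x * z,
        N.sub_mem (N.add_mem hz2 (hNmul z1 hz1 v hvN)) (hNmul x hx z hz), ?_⟩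
      have hpe : p = u * v - z := by rw [hpz]; abel
      rw [hpe, mul_sub, ← mul_assoc, hxu, add_mul, hy1v]
      abel
    have hpF : p ∈ Filt m' := by
      cases m' with
      | zero =>
        rw [hF0]
        refine ⟨hp, fun x hx => ?_⟩
        obtain ⟨y, hy, w, hw, h⟩ := key x hx
        rw [h]; exact N.add_mem hy hw
      | succ k =>
        rw [hFs]
        exact ⟨hp, fun x hx => key x hx⟩
    exact ⟨p, hpF, z, hz, hpz⟩
end

section
/- Let A = A⁺ ⊕ A⁻ be a polarized associative algebra over a field F, with A⁽⁰⁾ = {u ∈ A⁺ | A⁻u ⊆ A⁻}. Then A⁽⁰⁾ · A⁻ ⊆ A⁻, i.e., every element of A⁽⁰⁾ also maps A⁻ into A⁻ by right multiplication. -/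
/-- `A⁽⁰⁾ · A⁻ ⊆ A⁻`: elements of `A⁽⁰⁾` also stabilize `A⁻`
under right multiplication. -/
theorem polarized_filt_zero_right_stable
    {F : Type*} [Field F] {A : Type*} [Ring A] [Algebra F A]
    (B : LinearMap.BilinForm F A)
    (hsymm : ∀ u v : A, B u v = B v u)
    (hassoc : ∀ u v w : A, B (u * v) w = B u (v * w))
    (hnd : ∀ u : A, (∀ v : A, B u v = 0) → u = 0)
    (P N : Submodule F A)
    (hPmul : ∀ a ∈ P, ∀ b ∈ P, a * b ∈ P)
    (hNmul : ∀ a ∈ N, ∀ b ∈ N, a * b ∈ N)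
    (hPiso : ∀ a ∈ P, ∀ b ∈ P, B a b = 0)
    (hNiso : ∀ a ∈ N, ∀ b ∈ N, B a b = 0)
    (hcompl : IsCompl P N) :
    ∀ u ∈ {u : A | u ∈ P ∧ ∀ x ∈ N, x * u ∈ N}, ∀ x ∈ N, u * x ∈ N := by
  rintro u ⟨huP, huN⟩ x hx
  obtain ⟨p, n, hp, hn, hpn⟩ :=
    Submodule.codisjoint_iff_exists_add_eq.mp hcompl.codisjoint (u * x)
  have hux : ∀ m ∈ N, B (u * x) m = 0 := by
    intro m hm
    rw [hsymm, ← hassoc]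
    exact hNiso _ (huN m hm) x hx
  have hp0 : p = 0 := by
    apply hnd
    intro v
    obtain ⟨q, m, hq, hm, hqm⟩ :=
      Submodule.codisjoint_iff_exists_add_eq.mp hcompl.codisjoint v
    have h1 : B p q = 0 := hPiso p hp q hq
    have hsum : B p m + B n m = 0 := by
      have := hux m hm
      rw [← hpn] at this
      simpa [map_add] using this
    have h4 : B n m = 0 := hNiso n hn m hm
    have h2 : B p m = 0 := by linear_combination hsum - h4
    rw [← hqm]
    simp [map_add, h1, h2]
  have : u * x = n := by rw [← hpn, hp0, zero_add]
  rw [this]; exact hn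
end

section
/- Let A be an associative algebra with a nondegenerate symmetric associative bilinear form ⟨·,·⟩ and a direct sum decomposition A = A⁺ ⊕ A⁻ into isotropic subalgebras. For v ∈ A write v = v₊ + v₋ with v₊ ∈ A⁺, v₋ ∈ A⁻. Then for all u, v, w ∈ A: ⟨u, vw⟩ = ⟨u, v₊w₋⟩ + ⟨v, w₊u₋⟩ + ⟨w, u₊v₋⟩. -/
private lemma polarized_key
    {F : Type*} [Field F] {A : Type*} [Ring A] [Algebra F A]
    (B : LinearMap.BilinForm F A) (up um vp vm wp wm : A)
    (h1 : B up (vp * wp) = 0) (h2 : B um (vm * wm) = 0)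
    (e1 : B um (vp * wp) = B vp (wp * um))
    (e2 : B up (vm * wm) = B wm (up * vm))
    (e3 : B up (vm * wp) = B wp (up * vm))
    (e4 : B um (vm * wp) = B vm (wp * um)) :
    B (up + um) ((vp + vm) * (wp + wm)) =
      B (up + um) (vp * wm) + B (vp + vm) (wp * um) + B (wp + wm) (up * vm) := by
  simp only [mul_add, add_mul, map_add, LinearMap.add_apply]
  linear_combination h1 + h2 + e1 + e2 + e3 + e4

/-- Lemma 4.2, first identity:
`⟨u, vw⟩ = ⟨u, v₊w₋⟩ + ⟨v, w₊u₋⟩ + ⟨w, u₊v₋⟩`. -/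
theorem polarized_triple_product_identity
    {F : Type*} [Field F] {A : Type*} [Ring A] [Algebra F A]
    (B : LinearMap.BilinForm F A)
    (hsymm : ∀ u v : A, B u v = B v u)
    (hassoc : ∀ u v w : A, B (u * v) w = B u (v * w))
    (hnd : ∀ u : A, (∀ v : A, B u v = 0) → u = 0)
    (P N : Submodule F A)
    (hPmul : ∀ a ∈ P, ∀ b ∈ P, a * b ∈ P)
    (hNmul : ∀ a ∈ N, ∀ b ∈ N, a * b ∈ N)
    (hPiso : ∀ a ∈ P, ∀ b ∈ P, B a b = 0)
    (hNiso : ∀ a ∈ N, ∀ b ∈ N, B a b = 0)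
    (hcompl : IsCompl P N)
    (pp pm : A → A)
    (hpp : ∀ v : A, pp v ∈ P) (hpm : ∀ v : A, pm v ∈ N)
    (hdecomp : ∀ v : A, pp v + pm v = v) :
    ∀ u v w : A,
      B u (v * w) = B u (pp v * pm w) + B v (pp w * pm u) + B w (pp u * pm v) := by
  intro u v w
  have h1 : B (pp u) (pp v * pp w) = 0 :=
    hPiso _ (hpp u) _ (hPmul _ (hpp v) _ (hpp w))
  have h2 : B (pm u) (pm v * pm w) = 0 :=
    hNiso _ (hpm u) _ (hNmul _ (hpm v) _ (hpm w))
  have e1 : B (pm u) (pp v * pp w) = B (pp v) (pp w * pm u) :=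
    (hsymm _ _).trans (hassoc _ _ _)
  have e2 : B (pp u) (pm v * pm w) = B (pm w) (pp u * pm v) :=
    (hassoc _ _ _).symm.trans (hsymm _ _)
  have e3 : B (pp u) (pm v * pp w) = B (pp w) (pp u * pm v) :=
    (hassoc _ _ _).symm.trans (hsymm _ _)
  have e4 : B (pm u) (pm v * pp w) = B (pm v) (pp w * pm u) :=
    (hsymm _ _).trans (hassoc _ _ _)
  have key := polarized_key B (pp u) (pm u) (pp v) (pm v) (pp w) (pm w) h1 h2 e1 e2 e3 e4
  rwa [hdecomp u, hdecomp v, hdecomp w] at key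
end

section
/- Let A be an associative algebra with a symmetric associative bilinear form ⟨·,·⟩ and decomposition A = A⁺ ⊕ A⁻ into isotropic subalgebras, writing v = v₊ + v₋ for the projections. Then for all u, v, w ∈ A: ⟨u, v₊w₋⟩ + ⟨v, w₊u₋⟩ + ⟨w, u₊v₋⟩ = ⟨u, v₋w₊⟩ + ⟨v, w₋u₊⟩ + ⟨w, u₋v₊⟩. -/
/-- Lemma 4.2, equality of the two cyclic expressions:
`⟨u, v₊w₋⟩ + ⟨v, w₊u₋⟩ + ⟨w, u₊v₋⟩ = ⟨u, v₋w₊⟩ + ⟨v, w₋u₊⟩ + ⟨w, u₋v₊⟩`. -/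
theorem polarized_triple_product_symmetric
    {F : Type*} [Field F] {A : Type*} [Ring A] [Algebra F A]
    (B : LinearMap.BilinForm F A)
    (hsymm : ∀ u v : A, B u v = B v u)
    (hassoc : ∀ u v w : A, B (u * v) w = B u (v * w))
    (P N : Submodule F A)
    (hPmul : ∀ a ∈ P, ∀ b ∈ P, a * b ∈ P)
    (hNmul : ∀ a ∈ N, ∀ b ∈ N, a * b ∈ N)
    (hPiso : ∀ a ∈ P, ∀ b ∈ P, B a b = 0)
    (hNiso : ∀ a ∈ N, ∀ b ∈ N, B a b = 0)
    (hcompl : IsCompl P N)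
    (pp pm : A → A)
    (hpp : ∀ v : A, pp v ∈ P) (hpm : ∀ v : A, pm v ∈ N)
    (hdecomp : ∀ v : A, pp v + pm v = v) :
    ∀ u v w : A,
      B u (pp v * pm w) + B v (pp w * pm u) + B w (pp u * pm v)
        = B u (pm v * pp w) + B v (pm w * pp u) + B w (pm u * pp v) := by
  intro u v w
  set a := pp u with ha
  set a' := pm u with ha'
  set b := pp v with hb
  set b' := pm v with hb'
  set c := pp w with hc
  set c' := pm w with hc'
  have hu : u = a + a' := (hdecomp u).symm
  have hv : v = b + b' := (hdecomp v).symm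
  have hw : w = c + c' := (hdecomp w).symm
  rw [hu, hv, hw]
  simp only [map_add, LinearMap.add_apply]
  have h1 : B a (b * c') = B b (c' * a) := (hsymm a (b * c')).trans (hassoc b c' a)
  have h2 : B a' (b * c') = B c' (a' * b) :=
    ((hassoc a' b c').symm).trans (hsymm (a' * b) c')
  have h3 : B b (c * a') = B c (a' * b) := (hsymm b (c * a')).trans (hassoc c a' b)
  have h4 : B b' (c * a') = B a' (b' * c) :=
    ((hassoc b' c a').symm).trans (hsymm (b' * c) a')
  have h5 : B c (a * b') = B a (b' * c) := (hsymm c (a * b')).trans (hassoc a b' c)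
  have h6 : B c' (a * b') = B b' (c' * a) :=
    ((hassoc c' a b').symm).trans (hsymm (c' * a) b')
  linear_combination h1 + h2 + h3 + h4 + h5 + h6
end

section
/- Let A be an associative algebra with a symmetric associative bilinear form ⟨·,·⟩ and decomposition A = A⁺ ⊕ A⁻ into isotropic subalgebras, with projections v ↦ v₊, v ↦ v₋. Fix L ∈ A and define H : A → A by H(u) = (Lu)₋L − L(uL)₋. Then ⟨H(v), u⟩ = −⟨H(u), v⟩ for all u, v ∈ A. -/
/-- the Adler mapping `H(u) = (Lu)₋L − L(uL)₋` is skew-symmetric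
with respect to the form: `⟨H(v), u⟩ = −⟨H(u), v⟩`. -/
theorem adler_map_skew
    {F : Type*} [Field F] {A : Type*} [Ring A] [Algebra F A]
    (B : LinearMap.BilinForm F A)
    (hsymm : ∀ u v : A, B u v = B v u)
    (hassoc : ∀ u v w : A, B (u * v) w = B u (v * w))
    (P N : Submodule F A)
    (hPmul : ∀ a ∈ P, ∀ b ∈ P, a * b ∈ P)
    (hNmul : ∀ a ∈ N, ∀ b ∈ N, a * b ∈ N)
    (hPiso : ∀ a ∈ P, ∀ b ∈ P, B a b = 0)
    (hNiso : ∀ a ∈ N, ∀ b ∈ N, B a b = 0)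
    (hcompl : IsCompl P N)
    (pp pm : A → A)
    (hpp : ∀ v : A, pp v ∈ P) (hpm : ∀ v : A, pm v ∈ N)
    (hdecomp : ∀ v : A, pp v + pm v = v)
    (L : A) :
    ∀ u v : A,
      B (pm (L * v) * L - L * pm (v * L)) u
        = - B (pm (L * u) * L - L * pm (u * L)) v := by
  intro u v
  have key : ∀ x y : A, B (pm x) y + B x (pm y) = B x y := by
    intro x y
    have e1 : B (pm x) y = B (pm x) (pp y) := by
      conv_lhs => rw [← hdecomp y]
      rw [map_add, hNiso _ (hpm x) _ (hpm y), add_zero]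
    have e2 : B x (pm y) = B (pp x) (pm y) := by
      conv_lhs => rw [← hdecomp x]
      rw [map_add, LinearMap.add_apply, hNiso _ (hpm x) _ (hpm y), add_zero]
    have e3 : B x y = B (pm x) (pp y) + B (pp x) (pm y) := by
      conv_lhs => rw [← hdecomp x, ← hdecomp y]
      simp only [map_add, LinearMap.add_apply,
        hPiso _ (hpp x) _ (hpp y), hNiso _ (hpm x) _ (hpm y)]
      ring
    rw [e1, e2, e3]
  have a1 : B (pm (L * v) * L) u = B (pm (L * v)) (L * u) := hassoc _ _ _
  have a2 : B (L * pm (v * L)) u = B (pm (v * L)) (u * L) := by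
    rw [hassoc, hsymm, hassoc]
  have a3 : B (pm (L * u) * L) v = B (pm (L * u)) (L * v) := hassoc _ _ _
  have a4 : B (L * pm (u * L)) v = B (pm (u * L)) (v * L) := by
    rw [hassoc, hsymm, hassoc]
  have k1 : B (pm (L * v)) (L * u) + B (pm (L * u)) (L * v) = B (L * v) (L * u) := by
    have := key (L * v) (L * u)
    rwa [hsymm (L * v) (pm (L * u))] at this
  have k2 : B (pm (v * L)) (u * L) + B (pm (u * L)) (v * L) = B (v * L) (u * L) := by
    have := key (v * L) (u * L)
    rwa [hsymm (v * L) (pm (u * L))] at this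
  have cross : B (L * v) (L * u) = B (v * L) (u * L) := by
    rw [← hassoc, mul_assoc, hassoc, hsymm, hassoc]
  simp only [map_sub, LinearMap.sub_apply] at *
  rw [a1, a2, a3, a4]
  linear_combination k1 - k2 + cross
end

section
/- Let A be an associative algebra with a symmetric associative bilinear form ⟨·,·⟩ and decomposition A = A⁺ ⊕ A⁻ into isotropic subalgebras. Fix L ∈ A and let H(u) = (Lu)₋L − L(uL)₋. Then for all u, v, w ∈ A: ⟨L(uL)₋v, (Lw)₊⟩ + ⟨(Lu)₋L(vL)₋, w⟩ − ⟨(uL)₋(vL)₋, wL⟩, summed cyclically over (u,v,w), equals ⟨uLvL, wL⟩. -/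
/-- identity (4.76): the cyclic sum over `(u,v,w)` of
`⟨L(uL)₋v, (Lw)₊⟩ + ⟨(Lu)₋L(vL)₋, w⟩ − ⟨(uL)₋(vL)₋, wL⟩` equals `⟨uLvL, wL⟩`. -/
theorem adler_cyclic_identity
    {F : Type*} [Field F] {A : Type*} [Ring A] [Algebra F A]
    (B : LinearMap.BilinForm F A)
    (hsymm : ∀ u v : A, B u v = B v u)
    (hassoc : ∀ u v w : A, B (u * v) w = B u (v * w))
    (P N : Submodule F A)
    (hPmul : ∀ a ∈ P, ∀ b ∈ P, a * b ∈ P)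
    (hNmul : ∀ a ∈ N, ∀ b ∈ N, a * b ∈ N)
    (hPiso : ∀ a ∈ P, ∀ b ∈ P, B a b = 0)
    (hNiso : ∀ a ∈ N, ∀ b ∈ N, B a b = 0)
    (hcompl : IsCompl P N)
    (pp pm : A → A)
    (hpp : ∀ v : A, pp v ∈ P) (hpm : ∀ v : A, pm v ∈ N)
    (hdecomp : ∀ v : A, pp v + pm v = v)
    (L : A) :
    ∀ u v w : A,
      (fun u v w =>
          B (L * pm (u * L) * v) (pp (L * w))
            + B (pm (L * u) * L * pm (v * L)) w
            - B (pm (u * L) * pm (v * L)) (w * L)) u v w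
        + (fun u v w =>
          B (L * pm (u * L) * v) (pp (L * w))
            + B (pm (L * u) * L * pm (v * L)) w
            - B (pm (u * L) * pm (v * L)) (w * L)) v w u
        + (fun u v w =>
          B (L * pm (u * L) * v) (pp (L * w))
            + B (pm (L * u) * L * pm (v * L)) w
            - B (pm (u * L) * pm (v * L)) (w * L)) w u v
        = B (u * L * v * L) (w * L) := by
  intro u v w
  beta_reduce
  have hpp' : ∀ t : A, pp t = t - pm t := fun t => eq_sub_of_add_eq (hdecomp t)
  have canc : ∀ x y z : A,
      B (pm (L*x) * L * pm (y*L)) z = B (L * pm (y*L) * z) (pm (L*x)) := by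
    intro x y z
    calc B (pm (L*x) * L * pm (y*L)) z
        = B (pm (L*x) * L) (pm (y*L) * z) := hassoc _ _ _
      _ = B (pm (L*x)) (L * (pm (y*L) * z)) := hassoc _ _ _
      _ = B (L * (pm (y*L) * z)) (pm (L*x)) := hsymm _ _
      _ = B (L * pm (y*L) * z) (pm (L*x)) := by rw [mul_assoc]
  have blk : ∀ x y z : A,
      B (L * pm (x*L) * y) (L * z)
        = B (pm (x*L) * pm (y*L)) (z*L) + B (pm (x*L) * pp (y*L)) (z*L) := by
    intro x y z
    calc B (L * pm (x*L) * y) (L * z)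
        = B (L * pm (x*L)) (y * (L * z)) := hassoc _ _ _
      _ = B L (pm (x*L) * (y * (L * z))) := hassoc _ _ _
      _ = B (pm (x*L) * (y * (L * z))) L := hsymm _ _
      _ = B (pm (x*L)) ((y * (L * z)) * L) := hassoc _ _ _
      _ = B (pm (x*L)) ((pm (y*L) + pp (y*L)) * (z*L)) := by
            have h : (y * (L * z)) * L = (pm (y*L) + pp (y*L)) * (z*L) := by
              rw [add_comm, hdecomp]; noncomm_ring
            rw [h]
      _ = B (pm (x*L)) (pm (y*L) * (z*L)) + B (pm (x*L)) (pp (y*L) * (z*L)) := by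
            rw [add_mul, map_add]
      _ = B (pm (x*L) * pm (y*L)) (z*L) + B (pm (x*L) * pp (y*L)) (z*L) := by
            rw [hassoc, hassoc]
  have r1 : B (pm (v*L) * pp (w*L)) (u*L) = B ((u*L) * pm (v*L)) (pp (w*L)) := by
    calc B (pm (v*L) * pp (w*L)) (u*L)
        = B (pm (v*L)) (pp (w*L) * (u*L)) := hassoc _ _ _
      _ = B (pp (w*L) * (u*L)) (pm (v*L)) := hsymm _ _
      _ = B (pp (w*L)) ((u*L) * pm (v*L)) := hassoc _ _ _
      _ = B ((u*L) * pm (v*L)) (pp (w*L)) := hsymm _ _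
  have r2 : B (pm (w*L) * pp (u*L)) (v*L) = B (pp (u*L) * (v*L)) (pm (w*L)) := by
    calc B (pm (w*L) * pp (u*L)) (v*L)
        = B (pm (w*L)) (pp (u*L) * (v*L)) := hassoc _ _ _
      _ = B (pp (u*L) * (v*L)) (pm (w*L)) := hsymm _ _
  have e1 : B (pm (u*L) * pp (v*L)) (w*L)
      = B (pm (u*L) * pp (v*L)) (pp (w*L)) + B (pm (u*L) * pp (v*L)) (pm (w*L)) := by
    conv_lhs => rw [← hdecomp (w*L)]
    rw [map_add]
  have e2 : B ((u*L) * pm (v*L)) (pp (w*L))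
      = B (pp (u*L) * pm (v*L)) (pp (w*L)) + B (pm (u*L) * pm (v*L)) (pp (w*L)) := by
    conv_lhs => rw [← hdecomp (u*L)]
    rw [add_mul, map_add, LinearMap.add_apply]
  have e3 : B (pp (u*L) * (v*L)) (pm (w*L))
      = B (pp (u*L) * pp (v*L)) (pm (w*L)) + B (pp (u*L) * pm (v*L)) (pm (w*L)) := by
    conv_lhs => rw [← hdecomp (v*L)]
    rw [mul_add, map_add, LinearMap.add_apply]
  have eG : B (u*L*v*L) (w*L)
      = B (pp (u*L) * pp (v*L)) (pp (w*L)) + B (pp (u*L) * pp (v*L)) (pm (w*L))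
      + B (pp (u*L) * pm (v*L)) (pp (w*L)) + B (pp (u*L) * pm (v*L)) (pm (w*L))
      + B (pm (u*L) * pp (v*L)) (pp (w*L)) + B (pm (u*L) * pp (v*L)) (pm (w*L))
      + B (pm (u*L) * pm (v*L)) (pp (w*L)) + B (pm (u*L) * pm (v*L)) (pm (w*L)) := by
    have h : u*L*v*L = (u*L)*(v*L) := by rw [mul_assoc]
    conv_lhs => rw [h, ← hdecomp (u*L), ← hdecomp (v*L), ← hdecomp (w*L)]
    simp only [add_mul, mul_add, map_add, LinearMap.add_apply]
    ring
  have z1 : B (pp (u*L) * pp (v*L)) (pp (w*L)) = 0 :=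
    hPiso _ (hPmul _ (hpp _) _ (hpp _)) _ (hpp _)
  have z2 : B (pm (u*L) * pm (v*L)) (pm (w*L)) = 0 :=
    hNiso _ (hNmul _ (hpm _) _ (hpm _)) _ (hpm _)
  rw [hpp' (L*w), hpp' (L*u), hpp' (L*v)]
  simp only [map_sub]
  rw [blk u v w, blk v w u, blk w u v, canc u v w, canc v w u, canc w u v,
      e1, r1, e2, r2, e3, eG, z1, z2]
  ring
end
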